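/- Let \gamma > 0, d \geq 2, and define \lambda_n(\gamma,d) = \sum_{i=1}^d i \gamma^i \binom{d}{i}\binom{n-1}{i-1} + \gamma \sum_{i=1}^{d-1} (d-i)\gamma^i \binom{d}{i}\binom{n-1}{i-1} and \mu_n(\gamma,d) = \sum_{i=1}^d i \gamma^i \binom{d}{i}\binom{n-1}{i-1}. Then \lim_{n\to\infty} (\lambda_n(\gamma,d)/\mu_n(\gamma,d))^n = e^{d-1}. -/

import Mathlib

open Finset Filter Real

private lemma choose_div_pow_tendsto (k : ℕ) :
    Tendsto (fun n : ℕ => ((n - 1).choose k : ℝ) / (n : ℝ) ^ k) atTop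
      (nhds (1 / (k.factorial : ℝ))) := by
  have hprod : Tendsto (fun n : ℕ => ∏ j ∈ range k, (((n : ℝ) - 1 - j) / n)) atTop (nhds 1) := by
    have h1 : Tendsto (fun n : ℕ => ∏ j ∈ range k, (1 - (1 + (j : ℝ)) / n)) atTop
        (nhds (∏ _j ∈ range k, (1 : ℝ))) := by
      apply tendsto_finset_prod
      intro j _
      have := tendsto_const_div_atTop_nhds_zero_nat (1 + (j : ℝ))
      simpa using tendsto_const_nhds.sub this
    rw [Finset.prod_const_one] at h1
    apply h1.congr'
    filter_upwards [eventually_gt_atTop 0] with n hn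
    apply Finset.prod_congr rfl
    intro j _
    have hn' : (n : ℝ) ≠ 0 := Nat.cast_ne_zero.2 hn.ne'
    field_simp
    ring
  have key : ∀ᶠ n : ℕ in atTop,
      (∏ j ∈ range k, (((n : ℝ) - 1 - j) / n)) / (k.factorial : ℝ)
        = ((n - 1).choose k : ℝ) / (n : ℝ) ^ k := by
    filter_upwards [eventually_ge_atTop (k + 1)] with n hn
    have hn0 : (n : ℝ) ≠ 0 := Nat.cast_ne_zero.2 (by omega)
    have hP : (((n - 1).descFactorial k : ℕ) : ℝ) = ∏ j ∈ range k, ((n : ℝ) - 1 - j) := by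
      rw [Nat.descFactorial_eq_prod_range, Nat.cast_prod]
      apply Finset.prod_congr rfl
      intro j hj
      have hj' : j < k := Finset.mem_range.1 hj
      have h1 : 1 + j ≤ n := by omega
      push_cast [Nat.cast_sub (by omega : j ≤ n - 1), Nat.cast_sub (by omega : 1 ≤ n)]
      ring
    have hch : ((n - 1).choose k : ℝ) * (k.factorial : ℝ) = ∏ j ∈ range k, ((n : ℝ) - 1 - j) := by
      rw [← hP, ← Nat.cast_mul, Nat.descFactorial_eq_factorial_mul_choose, Nat.mul_comm]
    rw [Finset.prod_div_distrib, Finset.prod_const, Finset.card_range, ← hch]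
    have hf : (k.factorial : ℝ) ≠ 0 := Nat.cast_ne_zero.2 k.factorial_ne_zero
    field_simp
  have := (hprod.div_const (k.factorial : ℝ))
  exact this.congr' key

private lemma choose_div_pow_tendsto' {k m : ℕ} (hkm : k ≤ m) :
    Tendsto (fun n : ℕ => ((n - 1).choose k : ℝ) / (n : ℝ) ^ m) atTop
      (nhds (if k = m then 1 / (k.factorial : ℝ) else 0)) := by
  rcases eq_or_lt_of_le hkm with rfl | h
  · simpa using choose_div_pow_tendsto k
  · have hpow : Tendsto (fun n : ℕ => ((1 : ℝ) / n) ^ (m - k)) atTop (nhds ((0 : ℝ) ^ (m - k))) :=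
      (tendsto_one_div_atTop_nhds_zero_nat).pow _
    rw [zero_pow (by omega)] at hpow
    have h0 := (choose_div_pow_tendsto k).mul hpow
    rw [mul_zero] at h0
    rw [if_neg h.ne]
    apply h0.congr'
    filter_upwards [eventually_gt_atTop 0] with n hn
    have hn0 : (n : ℝ) ≠ 0 := Nat.cast_ne_zero.2 hn.ne'
    rw [div_pow, one_pow, div_mul_div_comm, mul_one, ← pow_add, Nat.add_sub_cancel' hkm]


private lemma tendsto_one_add_pow {r : ℕ → ℝ} (hr : ∀ n, 0 ≤ r n) {A : ℝ}
    (h : Tendsto (fun n : ℕ => (n : ℝ) * r n) atTop (nhds A)) :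
    Tendsto (fun n : ℕ => (1 + r n) ^ n) atTop (nhds (Real.exp A)) := by
  have hr0 : Tendsto r atTop (nhds 0) := by
    have h2 := h.mul (tendsto_one_div_atTop_nhds_zero_nat)
    rw [mul_zero] at h2
    apply h2.congr'
    filter_upwards [eventually_gt_atTop 0] with n hn
    have hn0 : (n : ℝ) ≠ 0 := Nat.cast_ne_zero.2 hn.ne'
    field_simp
  have hpos : ∀ n, (0 : ℝ) < 1 + r n := fun n => by linarith [hr n]
  have hlow : Tendsto (fun n : ℕ => (n : ℝ) * r n / (1 + r n)) atTop (nhds A) := by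
    have hden : Tendsto (fun n : ℕ => 1 + r n) atTop (nhds 1) := by
      simpa using tendsto_const_nhds.add hr0
    have h3 := h.div hden one_ne_zero
    rw [div_one] at h3
    exact h3
  have hlog : Tendsto (fun n : ℕ => (n : ℝ) * Real.log (1 + r n)) atTop (nhds A) := by
    apply tendsto_of_tendsto_of_tendsto_of_le_of_le hlow h
    · intro n
      have h1 : r n / (1 + r n) ≤ Real.log (1 + r n) := by
        have := Real.one_sub_inv_le_log_of_pos (hpos n)
        have he : 1 - (1 + r n)⁻¹ = r n / (1 + r n) := by
          rw [eq_div_iff (hpos n).ne', sub_mul, inv_mul_cancel₀ (hpos n).ne']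
          ring
        linarith [he ▸ this]
      calc (n : ℝ) * r n / (1 + r n) = (n : ℝ) * (r n / (1 + r n)) := by ring
        _ ≤ (n : ℝ) * Real.log (1 + r n) :=
          mul_le_mul_of_nonneg_left h1 (Nat.cast_nonneg n)
    · intro n
      have h1 : Real.log (1 + r n) ≤ r n := by
        have := Real.log_le_sub_one_of_pos (hpos n)
        linarith
      exact mul_le_mul_of_nonneg_left h1 (Nat.cast_nonneg n)
  have := (Real.continuous_exp.tendsto A).comp hlog
  apply this.congr
  intro n
  simp only [Function.comp]
  rw [Real.exp_nat_mul, Real.exp_log (hpos n)]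





/-- Birth rates of the family `BD(γ,d)`. -/
noncomputable def bdLambda (γ : ℝ) (d n : ℕ) : ℝ :=
  (∑ i ∈ Finset.Icc 1 d, (i : ℝ) * γ ^ i * (d.choose i) * ((n - 1).choose (i - 1)))
    + γ * ∑ i ∈ Finset.Icc 1 (d - 1),
        ((d : ℝ) - i) * γ ^ i * (d.choose i) * ((n - 1).choose (i - 1))

/-- Death rates of the family `BD(γ,d)`. -/
noncomputable def bdMu (γ : ℝ) (d n : ℕ) : ℝ :=
  ∑ i ∈ Finset.Icc 1 d, (i : ℝ) * γ ^ i * (d.choose i) * ((n - 1).choose (i - 1))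

/-- `lim_{n→∞} (λ_n(γ,d)/μ_n(γ,d))^n = e^{d-1}` for `γ > 0`, `d ≥ 2`. -/
theorem stmt_5 (γ : ℝ) (hγ : 0 < γ) (d : ℕ) (hd : 2 ≤ d) :
    Filter.Tendsto (fun n : ℕ => (bdLambda γ d n / bdMu γ d n) ^ n)
      Filter.atTop (nhds (Real.exp ((d : ℝ) - 1))) := by
  set S : ℕ → ℝ := fun n => ∑ i ∈ Finset.Icc 1 (d - 1),
      ((d : ℝ) - i) * γ ^ i * (d.choose i) * ((n - 1).choose (i - 1)) with hSdef
  -- positivity of μ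
  have hμpos : ∀ n, 0 < bdMu γ d n := by
    intro n
    apply Finset.sum_pos'
    · intro i hi
      have h1 : 1 ≤ i := (Finset.mem_Icc.1 hi).1
      have : (0:ℝ) ≤ (i : ℝ) := Nat.cast_nonneg i
      positivity
    · refine ⟨1, Finset.mem_Icc.2 ⟨le_refl 1, by omega⟩, ?_⟩
      simp [Nat.choose_one_right]
      positivity
  -- nonnegativity of S
  have hSnn : ∀ n, 0 ≤ S n := by
    intro n
    apply Finset.sum_nonneg
    intro i hi
    have h2 : i ≤ d - 1 := (Finset.mem_Icc.1 hi).2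
    have h3 : (i : ℝ) ≤ (d : ℝ) := by
      exact_mod_cast Nat.le_of_lt (by omega)
    have h4 : (0:ℝ) ≤ (d : ℝ) - i := by linarith
    positivity
  -- limit of μ_n / n^(d-1)
  have hmu : Tendsto (fun n : ℕ => bdMu γ d n / (n : ℝ) ^ (d - 1)) atTop
      (nhds ((d : ℝ) * γ ^ d / ((d - 1).factorial : ℝ))) := by
    have h1 : Tendsto (fun n : ℕ => ∑ i ∈ Finset.Icc 1 d,
        ((i : ℝ) * γ ^ i * (d.choose i)) * (((n - 1).choose (i - 1) : ℝ) / (n : ℝ) ^ (d - 1)))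
        atTop (nhds (∑ i ∈ Finset.Icc 1 d, ((i : ℝ) * γ ^ i * (d.choose i)) *
          (if i - 1 = d - 1 then 1 / ((i - 1).factorial : ℝ) else 0))) := by
      apply tendsto_finset_sum
      intro i hi
      have hi' := Finset.mem_Icc.1 hi
      exact tendsto_const_nhds.mul (choose_div_pow_tendsto' (by omega))
    have h2 : (∑ i ∈ Finset.Icc 1 d, ((i : ℝ) * γ ^ i * (d.choose i)) *
          (if i - 1 = d - 1 then 1 / ((i - 1).factorial : ℝ) else 0))
        = (d : ℝ) * γ ^ d / ((d - 1).factorial : ℝ) := by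
      rw [Finset.sum_eq_single_of_mem d (Finset.mem_Icc.2 ⟨by omega, le_refl d⟩)]
      · rw [if_pos rfl, Nat.choose_self]
        push_cast
        ring
      · intro b hb hbd
        have hb' := Finset.mem_Icc.1 hb
        rw [if_neg (by omega), mul_zero]
    rw [h2] at h1
    apply h1.congr
    intro n
    rw [bdMu, Finset.sum_div]
    exact Finset.sum_congr rfl fun i _ => (mul_div_assoc _ _ _).symm
  -- limit of S_n / n^(d-2)
  have hS : Tendsto (fun n : ℕ => S n / (n : ℝ) ^ (d - 2)) atTop
      (nhds ((d : ℝ) * γ ^ (d - 1) / ((d - 2).factorial : ℝ))) := by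
    have h1 : Tendsto (fun n : ℕ => ∑ i ∈ Finset.Icc 1 (d - 1),
        (((d : ℝ) - i) * γ ^ i * (d.choose i)) * (((n - 1).choose (i - 1) : ℝ) / (n : ℝ) ^ (d - 2)))
        atTop (nhds (∑ i ∈ Finset.Icc 1 (d - 1), (((d : ℝ) - i) * γ ^ i * (d.choose i)) *
          (if i - 1 = d - 2 then 1 / ((i - 1).factorial : ℝ) else 0))) := by
      apply tendsto_finset_sum
      intro i hi
      have hi' := Finset.mem_Icc.1 hi
      exact tendsto_const_nhds.mul (choose_div_pow_tendsto' (by omega))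
    have h2 : (∑ i ∈ Finset.Icc 1 (d - 1), (((d : ℝ) - i) * γ ^ i * (d.choose i)) *
          (if i - 1 = d - 2 then 1 / ((i - 1).factorial : ℝ) else 0))
        = (d : ℝ) * γ ^ (d - 1) / ((d - 2).factorial : ℝ) := by
      rw [Finset.sum_eq_single_of_mem (d - 1) (Finset.mem_Icc.2 ⟨by omega, le_refl _⟩)]
      · rw [if_pos (by omega)]
        have hc : d.choose (d - 1) = d := by
          rw [Nat.choose_symm (by omega : 1 ≤ d), Nat.choose_one_right]
        have hcast : ((d - 1 : ℕ) : ℝ) = (d : ℝ) - 1 := by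
          push_cast [Nat.cast_sub (by omega : 1 ≤ d)]; ring
        have hsub : d - 1 - 1 = d - 2 := by omega
        rw [hc, hcast, hsub]
        ring
      · intro b hb hbd
        have hb' := Finset.mem_Icc.1 hb
        rw [if_neg (by omega), mul_zero]
    rw [h2] at h1
    apply h1.congr
    intro n
    rw [hSdef, Finset.sum_div]
    exact Finset.sum_congr rfl fun i _ => (mul_div_assoc _ _ _).symm
  -- limit of n * (γ S n / μ n)
  have hfne : ((d - 1).factorial : ℝ) ≠ 0 := Nat.cast_ne_zero.2 (Nat.factorial_ne_zero _)
  have hfne2 : ((d - 2).factorial : ℝ) ≠ 0 := Nat.cast_ne_zero.2 (Nat.factorial_ne_zero _)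
  have hdne : (d : ℝ) ≠ 0 := Nat.cast_ne_zero.2 (by omega)
  have hLne : (d : ℝ) * γ ^ d / ((d - 1).factorial : ℝ) ≠ 0 := by
    have : γ ^ d ≠ 0 := pow_ne_zero _ hγ.ne'
    positivity
  have hfact : ((d - 1).factorial : ℝ) = ((d : ℝ) - 1) * ((d - 2).factorial : ℝ) := by
    have h1 : d - 1 = (d - 2) + 1 := by omega
    rw [h1, Nat.factorial_succ]
    push_cast [Nat.cast_sub (by omega : 2 ≤ d)]
    ring
  have hA : Tendsto (fun n : ℕ => (n : ℝ) * (γ * S n / bdMu γ d n)) atTop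
      (nhds ((d : ℝ) - 1)) := by
    have h1 := (tendsto_const_nhds (x := γ)).mul hS
    have h2 := h1.div hmu hLne
    have hval : γ * ((d : ℝ) * γ ^ (d - 1) / ((d - 2).factorial : ℝ))
        / ((d : ℝ) * γ ^ d / ((d - 1).factorial : ℝ)) = (d : ℝ) - 1 := by
      have hpow : γ * γ ^ (d - 1) = γ ^ d := by
        rw [← pow_succ']
        congr 1
        omega
      have h5 : γ ^ d ≠ 0 := pow_ne_zero _ hγ.ne'
      have h6 : (d : ℝ) - 1 ≠ 0 := by
        have : (2 : ℝ) ≤ (d : ℝ) := by exact_mod_cast hd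
        linarith
      rw [hfact]
      field_simp
      rw [← hpow]
    rw [hval] at h2
    apply h2.congr'
    filter_upwards [eventually_gt_atTop 0] with n hn
    have hn0 : (n : ℝ) ≠ 0 := Nat.cast_ne_zero.2 hn.ne'
    have hp1 : (n : ℝ) ^ (d - 1) = (n : ℝ) ^ (d - 2) * n := by
      rw [← pow_succ]
      congr 1
      omega
    simp only [Pi.div_apply]
    rw [hp1]
    have hμne := (hμpos n).ne'
    field_simp
  -- conclude
  have hr : ∀ n, 0 ≤ γ * S n / bdMu γ d n :=
    fun n => div_nonneg (mul_nonneg hγ.le (hSnn n)) (hμpos n).le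
  have hmain := tendsto_one_add_pow hr hA
  apply hmain.congr
  intro n
  congr 1
  rw [show bdLambda γ d n = bdMu γ d n + γ * S n from rfl, add_div,
    div_self (hμpos n).ne']
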